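/- Let f : Δ → Δ be a holomorphic self-map of the open unit disc, and let (z_k) be a sequence in Δ converging to 1 nontangentially such that f(z_k) = z_k + o(|z_k - 1|³) as k → ∞ (i.e. (f(z_k) - z_k)/|z_k - 1|³ → 0). Then f(z) = z for every z ∈ Δ. -/

import Mathlib

open Metric Filter

namespace BKAux

/-- Blaschke-type factor. -/
noncomputable def B (a z : ℂ) : ℂ := (z - a) / (1 - (starRingEnd ℂ) a * z)

lemma mem_iff {z : ℂ} : z ∈ ball (0:ℂ) 1 ↔ ‖z‖ < 1 := by
  rw [mem_ball_zero_iff]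

lemma denom_ne {a z : ℂ} (ha : ‖a‖ < 1) (hz : ‖z‖ ≤ 1) :
    1 - (starRingEnd ℂ) a * z ≠ 0 := by
  intro h
  have h1 : (1 : ℂ) = (starRingEnd ℂ) a * z := by linear_combination h
  have h2 : (1:ℝ) = ‖(starRingEnd ℂ) a * z‖ := by rw [← h1]; simp
  rw [norm_mul, Complex.norm_conj] at h2
  nlinarith [norm_nonneg a, norm_nonneg z]

lemma normSq_identity (a z : ℂ) :
    Complex.normSq (1 - (starRingEnd ℂ) a * z) - Complex.normSq (z - a)
      = (1 - Complex.normSq a) * (1 - Complex.normSq z) := by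
  simp only [Complex.normSq_apply, Complex.sub_re, Complex.sub_im, Complex.mul_re,
    Complex.mul_im, Complex.one_re, Complex.one_im, Complex.conj_re, Complex.conj_im]
  ring

lemma B_mem {a z : ℂ} (ha : ‖a‖ < 1) (hz : ‖z‖ < 1) :
    ‖B a z‖ < 1 := by
  have hd := denom_ne ha hz.le
  have hdpos : 0 < ‖1 - (starRingEnd ℂ) a * z‖ := norm_pos_iff.mpr hd
  rw [B, norm_div, div_lt_one hdpos]
  have hid := normSq_identity a z
  have h1 : Complex.normSq a < 1 := by
    rw [← Complex.sq_norm]; nlinarith [norm_nonneg a]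
  have h2 : Complex.normSq z < 1 := by
    rw [← Complex.sq_norm]; nlinarith [norm_nonneg z]
  have h3 : Complex.normSq (z - a) < Complex.normSq (1 - (starRingEnd ℂ) a * z) := by
    nlinarith
  rw [← Complex.sq_norm, ← Complex.sq_norm] at h3
  nlinarith [norm_nonneg (z - a), hdpos]

lemma B_diffOn {a : ℂ} (ha : ‖a‖ < 1) :
    DifferentiableOn ℂ (fun z => B a z) (ball (0:ℂ) 1) := by
  apply DifferentiableOn.div
  · exact (differentiable_id.sub_const a).differentiableOn
  · exact ((differentiable_const _).sub
      ((differentiable_const ((starRingEnd ℂ) a)).mul differentiable_id)).differentiableOn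
  · intro z hzm
    exact denom_ne ha (mem_iff.mp hzm).le

lemma B_inv {a z : ℂ} (ha : ‖a‖ < 1) (hz : ‖z‖ < 1) :
    B (-a) (B a z) = z := by
  have hd : 1 - (starRingEnd ℂ) a * z ≠ 0 := denom_ne ha hz.le
  have hd2 : 1 - (starRingEnd ℂ) (-a) * B a z ≠ 0 :=
    denom_ne (by simpa using ha) (B_mem ha hz).le
  rw [B, map_neg] at hd2
  rw [B, B, map_neg]
  rw [div_eq_iff hd2]
  have hd' : 1 - z * (starRingEnd ℂ) a ≠ 0 := by rwa [mul_comm] at hd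
  field_simp
  ring


lemma schwarz_pick (f : ℂ → ℂ) (hf : DifferentiableOn ℂ f (ball (0:ℂ) 1))
    (hm : Set.MapsTo f (ball (0:ℂ) 1) (ball (0:ℂ) 1)) {a z : ℂ}
    (ha : ‖a‖ < 1) (hz : ‖z‖ < 1) :
    ‖B (f a) (f z)‖ ≤ ‖B a z‖ := by
  have hfa : ‖f a‖ < 1 := mem_iff.mp (hm (mem_iff.mpr ha))
  have hna : ‖-a‖ < 1 := by simpa using ha
  have hmemB : ∀ w ∈ ball (0:ℂ) 1, B (-a) w ∈ ball (0:ℂ) 1 := fun w hw =>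
    mem_iff.mpr (B_mem hna (mem_iff.mp hw))
  set g : ℂ → ℂ := fun w => B (f a) (f (B (-a) w)) with hgdef
  have hinner : DifferentiableOn ℂ (fun w => f (B (-a) w)) (ball (0:ℂ) 1) :=
    hf.comp (B_diffOn hna) hmemB
  have hgd : DifferentiableOn ℂ g (ball (0:ℂ) 1) :=
    (B_diffOn hfa).comp hinner (fun w hw => hm (hmemB w hw))
  have hgm : Set.MapsTo g (ball (0:ℂ) 1) (ball (0:ℂ) 1) := fun w hw =>
    mem_iff.mpr (B_mem hfa (mem_iff.mp (hm (hmemB w hw))))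
  have hg0 : g 0 = 0 := by
    have hBa : B (-a) 0 = a := by simp [B]
    simp [hgdef, hBa, B, sub_self]
  have hBaz : ‖B a z‖ < 1 := B_mem ha hz
  have h := Complex.norm_le_norm_of_mapsTo_ball hgd (hgm.mono_right ball_subset_closedBall) hg0 hBaz
  simp only [hgdef] at h
  rwa [B_inv ha hz] at h

lemma schwarz_pick_sq (f : ℂ → ℂ) (hf : DifferentiableOn ℂ f (ball (0:ℂ) 1))
    (hm : Set.MapsTo f (ball (0:ℂ) 1) (ball (0:ℂ) 1)) {a z : ℂ}
    (ha : ‖a‖ < 1) (hz : ‖z‖ < 1) :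
    (1 - Complex.normSq a) * (1 - Complex.normSq z)
        * Complex.normSq (1 - (starRingEnd ℂ) (f a) * f z)
      ≤ (1 - Complex.normSq (f a)) * (1 - Complex.normSq (f z))
        * Complex.normSq (1 - (starRingEnd ℂ) a * z) := by
  have hfa : ‖f a‖ < 1 := mem_iff.mp (hm (mem_iff.mpr ha))
  have hfz : ‖f z‖ < 1 := mem_iff.mp (hm (mem_iff.mpr hz))
  have hd1 : 1 - (starRingEnd ℂ) a * z ≠ 0 := denom_ne ha hz.le
  have hd2 : 1 - (starRingEnd ℂ) (f a) * f z ≠ 0 := denom_ne hfa hfz.le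
  have hP : 0 < Complex.normSq (1 - (starRingEnd ℂ) a * z) := Complex.normSq_pos.mpr hd1
  have hQ : 0 < Complex.normSq (1 - (starRingEnd ℂ) (f a) * f z) := Complex.normSq_pos.mpr hd2
  have h := schwarz_pick f hf hm ha hz
  have h2 : Complex.normSq (B (f a) (f z)) ≤ Complex.normSq (B a z) := by
    rw [← Complex.sq_norm, ← Complex.sq_norm]
    exact pow_le_pow_left₀ (norm_nonneg _) h 2
  rw [B, B, map_div₀, map_div₀, div_le_div_iff₀ hQ hP] at h2
  have hia := normSq_identity a z
  have hif := normSq_identity (f a) (f z)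
  nlinarith [h2, hP, hQ]


lemma re_one_add_div (u : ℂ) :
    ((1 + u)/(1 - u)).re = (1 - Complex.normSq u)/Complex.normSq (1 - u) := by
  rw [Complex.div_re, ← add_div]
  congr 1
  simp only [Complex.add_re, Complex.add_im, Complex.sub_re, Complex.sub_im, Complex.one_re,
    Complex.one_im, Complex.normSq_apply]
  ring

end BKAux

open BKAux

set_option maxHeartbeats 2000000

/-- Proposition 3.2: a holomorphic self-map `f` of the unit disc satisfying
`f z_k = z_k + o(|z_k-1|^3)` along a sequence converging to `1` nontangentially
is the identity. -/
theorem burns_krantz_disc_nontangential (f : ℂ → ℂ)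
    (hf : DifferentiableOn ℂ f (ball (0 : ℂ) 1))
    (hmap : Set.MapsTo f (ball (0 : ℂ) 1) (ball (0 : ℂ) 1))
    (z : ℕ → ℂ) (hz : ∀ k, z k ∈ ball (0 : ℂ) 1)
    (hlim : Tendsto z atTop (nhds 1))
    (hnontan : ∃ C > 0, ∀ k, ‖1 - z k‖ ≤ C * (1 - ‖z k‖))
    (hasym : Tendsto (fun k => (f (z k) - z k) / (‖z k - 1‖ : ℂ) ^ 3)
      atTop (nhds 0)) :
    ∀ w ∈ ball (0 : ℂ) 1, f w = w := by
  obtain ⟨C, hC0, hCle⟩ := hnontan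
  have habs : ∀ k, ‖z k‖ < 1 := fun k => mem_iff.mp (hz k)
  have hfabs : ∀ k, ‖f (z k)‖ < 1 := fun k => mem_iff.mp (hmap (hz k))
  have hne1 : ∀ u : ℂ, ‖u‖ < 1 → (1:ℂ) - u ≠ 0 := by
    intro u hu h
    have h2 : u = 1 := by linear_combination -h
    rw [h2] at hu; simp at hu
  set A : ℕ → ℝ := fun k => ‖1 - z k‖ with hAdef
  set d : ℕ → ℂ := fun k => f (z k) - z k with hddef
  have hApos : ∀ k, 0 < A k := fun k => norm_pos_iff.mpr (hne1 _ (habs k))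
  have hA1 : ∀ k, ‖z k - 1‖ = A k := fun k => norm_sub_rev _ _
  have hA0 : Tendsto A atTop (nhds 0) := by
    have hc : Continuous fun u : ℂ => ‖1 - u‖ :=
      continuous_norm.comp (continuous_const.sub continuous_id)
    have h1 := (hc.tendsto 1).comp hlim
    simpa [hAdef, Function.comp_def] using h1
  have heps : Tendsto (fun k => ‖d k‖ / A k ^ 3) atTop (nhds 0) := by
    have h1 := (continuous_norm.tendsto 0).comp hasym
    simp only [Function.comp_def, norm_zero] at h1
    refine h1.congr fun k => ?_
    rw [norm_div, norm_pow, Complex.norm_real, Real.norm_eq_abs, abs_of_nonneg (norm_nonneg _), hA1 k]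
  have hd0 : Tendsto d atTop (nhds (0:ℂ)) := by
    have hXc : Tendsto (fun k => ((‖z k - 1‖ : ℝ) : ℂ) ^ 3) atTop (nhds 0) := by
      have h2 : Tendsto (fun k => ((‖z k - 1‖ : ℝ) : ℂ)) atTop (nhds 0) := by
        have h3 : Tendsto (fun k => ((A k : ℝ) : ℂ)) atTop (nhds ((0:ℝ):ℂ)) :=
          (Complex.continuous_ofReal.tendsto _).comp hA0
        simp only [Complex.ofReal_zero] at h3
        refine h3.congr fun k => ?_
        rw [hA1 k]
      have h4 := h2.pow 3
      simpa using h4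
    have hmul := hasym.mul hXc
    simp only [zero_mul] at hmul
    refine hmul.congr fun k => ?_
    have hXne : ((‖z k - 1‖ : ℝ) : ℂ) ^ 3 ≠ 0 := by
      apply pow_ne_zero
      simp only [ne_eq, Complex.ofReal_eq_zero]
      rw [hA1 k]; exact (hApos k).ne'
    rw [div_mul_cancel₀ _ hXne]
  have hfz1 : Tendsto (fun k => f (z k)) atTop (nhds 1) := by
    have h1 := hlim.add hd0
    simp only [add_zero] at h1
    refine h1.congr fun k => ?_
    show z k + (f (z k) - z k) = f (z k)
    ring
  have t1 : Tendsto (fun k => ‖d k‖ / A k) atTop (nhds 0) := by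
    have h2 : Tendsto (fun k => A k ^ 2) atTop (nhds 0) := by
      have := hA0.pow 2; simpa using this
    have h3 := heps.mul h2
    simp only [zero_mul] at h3
    refine h3.congr fun k => ?_
    have hAne := (hApos k).ne'
    field_simp
  have hnq : ∀ k, 0 < 1 - Complex.normSq (z k) := by
    intro k
    have h1 := Complex.sq_norm (z k)
    nlinarith [habs k, norm_nonneg (z k)]
  have hAC : ∀ k, A k / C ≤ 1 - Complex.normSq (z k) := by
    intro k
    rw [div_le_iff₀ hC0]
    have h1 := Complex.sq_norm (z k)
    have hCk := hCle k
    rw [show ‖1 - z k‖ = A k from rfl] at hCk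
    have h2 : Complex.normSq (z k) ≤ ‖z k‖ := by
      nlinarith [habs k, norm_nonneg (z k)]
    have h3 := mul_le_mul_of_nonneg_left
      (show 1 - ‖z k‖ ≤ 1 - Complex.normSq (z k) by linarith) hC0.le
    linarith
  -- the ratio (1 - |f z_k|²)/(1 - |z_k|²) tends to 1
  have hr : Tendsto (fun k => (1 - Complex.normSq (f (z k))) / (1 - Complex.normSq (z k)))
      atTop (nhds 1) := by
    have hb : ∀ k, |(1 - Complex.normSq (f (z k))) / (1 - Complex.normSq (z k)) - 1|
        ≤ 2*C*(‖d k‖ / A k) := by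
      intro k
      have hnqk := hnq k
      have h1 : (1 - Complex.normSq (f (z k))) / (1 - Complex.normSq (z k)) - 1
          = (Complex.normSq (z k) - Complex.normSq (f (z k))) / (1 - Complex.normSq (z k)) := by
        field_simp
        ring
      rw [h1, abs_div, abs_of_pos hnqk]
      have h2 : |‖z k‖ - ‖f (z k)‖| ≤ ‖d k‖ := by
        have h3 := abs_norm_sub_norm_le (z k) (f (z k))
        calc |‖z k‖ - ‖f (z k)‖| ≤ ‖z k - f (z k)‖ := h3
          _ = ‖d k‖ := by rw [show d k = f (z k) - z k from rfl]
                          exact (norm_sub_rev _ _).symm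
      have hub : |Complex.normSq (z k) - Complex.normSq (f (z k))| ≤ 2 * ‖d k‖ := by
        have h4 := Complex.sq_norm (z k)
        have h5 := Complex.sq_norm (f (z k))
        have h6 := abs_le.mp h2
        rw [abs_le]
        constructor <;> nlinarith [habs k, hfabs k, norm_nonneg (z k),
          norm_nonneg (f (z k)), norm_nonneg (d k)]
      calc |Complex.normSq (z k) - Complex.normSq (f (z k))| / (1 - Complex.normSq (z k))
          ≤ (2 * ‖d k‖) / (A k / C) := by
            apply div_le_div₀ (by positivity) hub (div_pos (hApos k) hC0) (hAC k)
        _ = 2*C*(‖d k‖ / A k) := by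
            field_simp
    have hg0 : Tendsto (fun k => 2*C*(‖d k‖ / A k)) atTop (nhds 0) := by
      have := t1.const_mul (2*C); simpa using this
    have hsq : Tendsto (fun k => (1 - Complex.normSq (f (z k))) / (1 - Complex.normSq (z k)) - 1)
        atTop (nhds 0) := by
      apply squeeze_zero_norm _ hg0
      intro n
      rw [Real.norm_eq_abs]
      exact hb n
    have := hsq.add (tendsto_const_nhds (x := (1:ℝ)))
    simp only [zero_add] at this
    refine this.congr fun k => ?_
    ring
  -- Step 1: Julia-type inequality at the boundary point 1
  have hstar : ∀ w ∈ ball (0:ℂ) 1, (1 - Complex.normSq w) * Complex.normSq (1 - f w)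
      ≤ (1 - Complex.normSq (f w)) * Complex.normSq (1 - w) := by
    intro w hw
    have hWa : ‖w‖ < 1 := mem_iff.mp hw
    have hLHS : Tendsto
        (fun k => (1 - Complex.normSq w) * Complex.normSq (1 - (starRingEnd ℂ) (f (z k)) * f w))
        atTop (nhds ((1 - Complex.normSq w) * Complex.normSq (1 - f w))) := by
      have h2 : Tendsto (fun k => (starRingEnd ℂ) (f (z k))) atTop (nhds 1) := by
        have := (Complex.continuous_conj.tendsto 1).comp hfz1
        simpa [Function.comp_def] using this
      have h3 := h2.mul (tendsto_const_nhds (x := f w))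
      have h1 : Tendsto (fun k => (1:ℂ) - (starRingEnd ℂ) (f (z k)) * f w) atTop
          (nhds (1 - f w)) := by
        have := (tendsto_const_nhds (x := (1:ℂ))).sub h3
        simpa using this
      exact tendsto_const_nhds.mul ((Complex.continuous_normSq.tendsto _).comp h1)
    have hRHS : Tendsto
        (fun k => (1 - Complex.normSq (f (z k))) / (1 - Complex.normSq (z k))
            * ((1 - Complex.normSq (f w)) * Complex.normSq (1 - (starRingEnd ℂ) (z k) * w)))
        atTop (nhds ((1 - Complex.normSq (f w)) * Complex.normSq (1 - w))) := by
      have h2 : Tendsto (fun k => (starRingEnd ℂ) (z k)) atTop (nhds 1) := by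
        have := (Complex.continuous_conj.tendsto 1).comp hlim
        simpa [Function.comp_def] using this
      have h3 := h2.mul (tendsto_const_nhds (x := w))
      have h1 : Tendsto (fun k => (1:ℂ) - (starRingEnd ℂ) (z k) * w) atTop (nhds (1 - w)) := by
        have := (tendsto_const_nhds (x := (1:ℂ))).sub h3
        simpa using this
      have h4 : Tendsto (fun k => (1 - Complex.normSq (f w))
          * Complex.normSq (1 - (starRingEnd ℂ) (z k) * w)) atTop
          (nhds ((1 - Complex.normSq (f w)) * Complex.normSq (1 - w))) :=
        tendsto_const_nhds.mul ((Complex.continuous_normSq.tendsto _).comp h1)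
      have h5 := hr.mul h4
      simpa using h5
    refine le_of_tendsto_of_tendsto' hLHS hRHS fun k => ?_
    have hsp := schwarz_pick_sq f hf hmap (habs k) hWa
    rw [div_mul_eq_mul_div, le_div_iff₀ (hnq k)]
    nlinarith [hsp]
  -- Step 2: the auxiliary function g with nonnegative real part
  set g : ℂ → ℂ := fun u => (1 + f u)/(1 - f u) - (1 + u)/(1 - u) with hgdef
  have hgd : DifferentiableOn ℂ g (ball (0:ℂ) 1) := by
    apply DifferentiableOn.sub
    · exact DifferentiableOn.div ((differentiableOn_const _).add hf)
        ((differentiableOn_const _).sub hf)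
        (fun u hu => hne1 _ (mem_iff.mp (hmap hu)))
    · exact DifferentiableOn.div ((differentiableOn_const _).add differentiableOn_id)
        ((differentiableOn_const _).sub differentiableOn_id)
        (fun u hu => hne1 _ (mem_iff.mp hu))
  have hgre : ∀ u ∈ ball (0:ℂ) 1, 0 ≤ (g u).re := by
    intro u hu
    have hu1 : ‖u‖ < 1 := mem_iff.mp hu
    have hfu : ‖f u‖ < 1 := mem_iff.mp (hmap hu)
    have e1 := re_one_add_div (f u)
    have e2 := re_one_add_div u
    rw [hgdef]
    simp only [Complex.sub_re]
    rw [e1, e2, sub_nonneg, div_le_div_iff₀ (Complex.normSq_pos.mpr (hne1 _ hu1))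
      (Complex.normSq_pos.mpr (hne1 _ hfu))]
    exact hstar u hu
  -- g(z_k) is o(|1 - z_k|)
  have hdle : ∀ᶠ k in atTop, ‖d k‖ ≤ A k / 2 := by
    have h1 : ∀ᶠ k in atTop, ‖d k‖ / A k < 1/2 :=
      t1.eventually_lt_const (by norm_num)
    filter_upwards [h1] with k hk
    rw [div_lt_iff₀ (hApos k)] at hk
    linarith
  have hgz : Tendsto (fun k => ‖g (z k)‖ / A k) atTop (nhds 0) := by
    have hbnd : ∀ᶠ k in atTop, ‖g (z k)‖ / A k
        ≤ 4 * (‖d k‖ / A k^3) := by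
      filter_upwards [hdle] with k hk
      have hApk := hApos k
      have hAk : ‖1 - z k‖ = A k := rfl
      have hf1 : A k / 2 ≤ ‖1 - f (z k)‖ := by
        have hid : (1:ℂ) - f (z k) = (1 - z k) - d k := by
          show (1:ℂ) - f (z k) = (1 - z k) - (f (z k) - z k)
          ring
        have h2 : ‖1 - z k‖ - ‖d k‖
            ≤ ‖(1 - z k) - d k‖ := by
          have h3 := norm_sub_norm_le (1 - z k) (d k)
          simpa using h3
        rw [hid]
        rw [hAk] at h2
        linarith
      have hz1 : (1:ℂ) - z k ≠ 0 := hne1 _ (habs k)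
      have hz2 : (1:ℂ) - f (z k) ≠ 0 := hne1 _ (hfabs k)
      have hgid : g (z k) = 2 * d k / ((1 - f (z k)) * (1 - z k)) := by
        rw [hgdef]
        simp only [hddef]
        field_simp
        ring
      rw [hgid, norm_div, norm_mul, norm_mul]
      rw [Complex.norm_two, hAk]
      rw [div_div]
      have heq : 4*(‖d k‖/A k^3) = (2*‖d k‖)/(A k^3/2) := by
        field_simp
        ring
      rw [heq]
      apply div_le_div₀ (by positivity) le_rfl (by positivity)
      nlinarith [hf1, hApk, norm_nonneg (1 - f (z k)),
        mul_le_mul_of_nonneg_right hf1 (mul_pos hApk hApk).le]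
    refine squeeze_zero' ?_ hbnd ?_
    · filter_upwards with k
      positivity
    · have := heps.const_mul 4
      simpa using this
  have hgz0 : Tendsto (fun k => g (z k)) atTop (nhds (0:ℂ)) := by
    rw [tendsto_zero_iff_norm_tendsto_zero]
    have h1 := hgz.mul hA0
    simp only [zero_mul] at h1
    refine h1.congr fun k => ?_
    rw [div_mul_cancel₀ _ (hApos k).ne']
  -- Step 3: open mapping dichotomy
  intro w hw
  have hgan : AnalyticOnNhd ℂ g (ball (0:ℂ) 1) := hgd.analyticOnNhd isOpen_ball
  rcases hgan.is_constant_or_isOpen (convex_ball (0:ℂ) 1).isPreconnected with ⟨c, hc⟩ | hopen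
  · -- constant case: the constant must be 0, hence f = id
    have hc0 : c = 0 := by
      have h1 : Tendsto (fun k => g (z k)) atTop (nhds c) := by
        have : (fun k => g (z k)) = fun _ => c := funext fun k => hc _ (hz k)
        rw [this]; exact tendsto_const_nhds
      exact tendsto_nhds_unique h1 hgz0
    have hgw : g w = 0 := by rw [← hc0]; exact hc w hw
    rw [hgdef] at hgw
    simp only at hgw
    have h1 : (1:ℂ) - w ≠ 0 := hne1 _ (mem_iff.mp hw)
    have h2 : (1:ℂ) - f w ≠ 0 := hne1 _ (mem_iff.mp (hmap hw))
    rw [sub_eq_zero, div_eq_div_iff h2 h1] at hgw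
    linear_combination hgw/2
  · -- open case: contradiction
    exfalso
    have himg : IsOpen (g '' ball (0:ℂ) 1) := hopen _ (subset_refl _) isOpen_ball
    have hgpos : ∀ u ∈ ball (0:ℂ) 1, 0 < (g u).re := by
      intro u hu
      rcases (hgre u hu).lt_or_eq with h | h
      · exact h
      exfalso
      obtain ⟨δ, hδ, hball⟩ := Metric.isOpen_iff.mp himg (g u) ⟨u, hu, rfl⟩
      have hmem : g u - ((δ/2 : ℝ) : ℂ) ∈ ball (g u) δ := by
        rw [mem_ball, dist_eq_norm]
        have he : g u - ((δ/2 : ℝ) : ℂ) - g u = -((δ/2 : ℝ) : ℂ) := by ring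
        rw [he, norm_neg, Complex.norm_real]
        rw [Real.norm_eq_abs, abs_of_pos (by linarith)]
        linarith
      obtain ⟨v, hv, hveq⟩ := hball hmem
      have h5 := hgre v hv
      rw [hveq] at h5
      simp only [Complex.sub_re, Complex.ofReal_re] at h5
      rw [← h] at h5
      linarith
    set q : ℂ → ℂ := fun u => (g u - 1)/(g u + 1) with hqdef
    have hgne : ∀ u ∈ ball (0:ℂ) 1, g u + 1 ≠ 0 := by
      intro u hu h
      have h1 : (g u + 1).re = 0 := by rw [h]; simp
      simp only [Complex.add_re, Complex.one_re] at h1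
      have := hgpos u hu
      linarith
    have hqmem : ∀ u ∈ ball (0:ℂ) 1, ‖q u‖ < 1 := by
      intro u hu
      have hpos := hgpos u hu
      have hne := hgne u hu
      rw [hqdef]
      simp only
      rw [norm_div, div_lt_one (norm_pos_iff.mpr hne)]
      have hlt : Complex.normSq (g u - 1) < Complex.normSq (g u + 1) := by
        simp only [Complex.normSq_apply, Complex.sub_re, Complex.sub_im, Complex.add_re,
          Complex.add_im, Complex.one_re, Complex.one_im]
        nlinarith [hpos]
      rw [← Complex.sq_norm, ← Complex.sq_norm] at hlt
      nlinarith [norm_nonneg (g u - 1), norm_pos_iff.mpr hne]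
    have hqmaps : Set.MapsTo q (ball (0:ℂ) 1) (ball (0:ℂ) 1) := fun u hu =>
      mem_iff.mpr (hqmem u hu)
    have hqd : DifferentiableOn ℂ q (ball (0:ℂ) 1) :=
      (hgd.sub (differentiableOn_const 1)).div (hgd.add (differentiableOn_const 1)) hgne
    have h0mem : (0:ℂ) ∈ ball (0:ℂ) 1 := mem_ball_self one_pos
    have hq0 : ‖q 0‖ < 1 := hqmem 0 h0mem
    have key : ∀ k, A k * (1 - ‖q 0‖)^2 ≤ 4 * C * ‖g (z k)‖ := by
      intro k
      have hsp := schwarz_pick_sq q hqd hqmaps (show ‖(0:ℂ)‖ < 1 by simp) (habs k)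
      simp only [map_zero, Complex.normSq_zero, sub_zero, one_mul, zero_mul, mul_one,
        Complex.normSq_one] at hsp
      -- hsp : (1 - nq z_k) * nq (1 - conj (q 0) * q (z k)) ≤ (1 - nq (q 0)) * (1 - nq (q z_k))
      have hqk := hqmem (z k) (hz k)
      have hb2 : (1 - ‖q 0‖)^2
          ≤ Complex.normSq (1 - (starRingEnd ℂ) (q 0) * q (z k)) := by
        have hu : ‖(starRingEnd ℂ) (q 0) * q (z k)‖ ≤ ‖q 0‖ := by
          rw [norm_mul, Complex.norm_conj]
          nlinarith [norm_nonneg (q 0), norm_nonneg (q (z k)), hqk]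
        have hlb : 1 - ‖q 0‖
            ≤ ‖1 - (starRingEnd ℂ) (q 0) * q (z k)‖ := by
          have h7 := norm_sub_norm_le (1:ℂ) ((starRingEnd ℂ) (q 0) * q (z k))
          simp only [norm_one] at h7
          linarith
        have h8 : (0:ℝ) ≤ 1 - ‖q 0‖ := by linarith
        nlinarith [Complex.sq_norm (1 - (starRingEnd ℂ) (q 0) * q (z k))]
      have hb4 : 1 - Complex.normSq (q (z k)) ≤ 4 * ‖g (z k)‖ := by
        have hposk := hgpos (z k) (hz k)
        have hnek := hgne (z k) (hz k)
        have h1p : (1:ℝ) ≤ ‖g (z k) + 1‖ := by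
          have h9 := Complex.re_le_norm (g (z k) + 1)
          simp only [Complex.add_re, Complex.one_re] at h9
          linarith
        have hqq : 1 + q (z k) = 2 * g (z k) / (g (z k) + 1) := by
          rw [hqdef]
          simp only
          field_simp
          ring
        have h2 : ‖1 + q (z k)‖ ≤ 2 * ‖g (z k)‖ := by
          rw [hqq, norm_div, norm_mul, Complex.norm_two]
          rw [div_le_iff₀ (lt_of_lt_of_le one_pos h1p)]
          nlinarith [norm_nonneg (g (z k))]
        have h3 : 1 - ‖q (z k)‖ ≤ ‖1 + q (z k)‖ := by
          have h10 := norm_sub_norm_le (1:ℂ) (-(q (z k)))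
          simp only [norm_neg, sub_neg_eq_add, norm_one] at h10
          linarith
        have h4 := Complex.sq_norm (q (z k))
        have h5 : 1 - ‖q (z k)‖ ≤ 2 * ‖g (z k)‖ := by linarith
        nlinarith [h5, hqk, norm_nonneg (q (z k)), h4]
      have hchain : A k / C * (1 - ‖q 0‖)^2
          ≤ (1 - Complex.normSq (q 0)) * (1 - Complex.normSq (q (z k))) :=
        le_trans (mul_le_mul (hAC k) hb2 (by positivity) (le_of_lt (hnq k))) hsp
      have hup : (1 - Complex.normSq (q 0)) * (1 - Complex.normSq (q (z k)))
          ≤ 4 * ‖g (z k)‖ := by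
        have hb3 : 1 - Complex.normSq (q 0) ≤ 1 := by
          nlinarith [Complex.normSq_nonneg (q 0)]
        have hnn : 0 ≤ 1 - Complex.normSq (q (z k)) := by
          have := Complex.sq_norm (q (z k))
          nlinarith [norm_nonneg (q (z k)), hqk]
        calc (1 - Complex.normSq (q 0)) * (1 - Complex.normSq (q (z k)))
            ≤ 1 * (4 * ‖g (z k)‖) :=
              mul_le_mul hb3 hb4 hnn (by norm_num)
          _ = 4 * ‖g (z k)‖ := by ring
      have h13 : A k / C * (1 - ‖q 0‖)^2 ≤ 4 * ‖g (z k)‖ :=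
        le_trans hchain hup
      have h14 := mul_le_mul_of_nonneg_right h13 hC0.le
      calc A k * (1 - ‖q 0‖)^2
          = A k / C * (1 - ‖q 0‖)^2 * C := by field_simp
        _ ≤ 4 * ‖g (z k)‖ * C := h14
        _ = 4 * C * ‖g (z k)‖ := by ring
    have hlow : ∀ k, (1 - ‖q 0‖)^2 / (4*C) ≤ ‖g (z k)‖ / A k := by
      intro k
      rw [div_le_div_iff₀ (by positivity) (hApos k)]
      nlinarith [key k]
    have hfinal : (1 - ‖q 0‖)^2 / (4*C) ≤ 0 :=
      ge_of_tendsto hgz (Eventually.of_forall hlow)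
    have hposq : 0 < (1 - ‖q 0‖)^2 / (4*C) := by
      apply div_pos
      · have : 0 < 1 - ‖q 0‖ := by linarith
        positivity
      · linarith
    linarith
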